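/- Let F be an n×n real Metzler matrix (all off-diagonal entries nonnegative). If there exists a vector v ∈ ℝⁿ with all entries strictly positive such that every entry of the row vector vᵀ F is strictly negative, then F is Hurwitz stable, i.e., every eigenvalue of F (viewed as a complex matrix) has strictly negative real part. -/

import Mathlib

open Matrix Finset

/-- If `F` is Metzler and there is a positive vector `v` with `vᵀ F < 0` entrywise,
then `F` is Hurwitz stable. -/
theorem metzler_hurwitz_of_positive_vector
    (n : ℕ) (F : Matrix (Fin n) (Fin n) ℝ)
    (hMetzler : ∀ i j, i ≠ j → 0 ≤ F i j)
    (v : Fin n → ℝ) (hv : ∀ i, 0 < v i)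
    (hvF : ∀ j, (v ᵥ* F) j < 0) :
    ∀ z ∈ spectrum ℂ (F.map (Complex.ofReal ·)), z.re < 0 := by
  intro z hz
  set M : Matrix (Fin n) (Fin n) ℂ := F.map (Complex.ofReal ·) with hMdef
  rw [spectrum.mem_iff] at hz
  have hdet : (algebraMap ℂ (Matrix (Fin n) (Fin n) ℂ) z - M).det = 0 := by
    by_contra h
    exact hz ((Matrix.isUnit_iff_isUnit_det _).2 (isUnit_iff_ne_zero.2 h))
  have hdetT : ((algebraMap ℂ (Matrix (Fin n) (Fin n) ℂ) z - M)ᵀ).det = 0 := by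
    rw [Matrix.det_transpose]; exact hdet
  obtain ⟨x, hx0, hxe⟩ := (Matrix.exists_mulVec_eq_zero_iff).2 hdetT
  have key : ∀ j, ∑ i, M i j * x i = z * x j := by
    intro j
    have h := congrFun hxe j
    simp only [Matrix.mulVec, dotProduct, Matrix.transpose_apply, Matrix.sub_apply,
      Matrix.algebraMap_matrix_apply, sub_mul, Finset.sum_sub_distrib, Pi.zero_apply] at h
    simp only [ite_mul, zero_mul, Finset.sum_ite_eq' Finset.univ j, Finset.mem_univ,
      if_true, Algebra.algebraMap_self, RingHom.id_apply] at h
    exact (sub_eq_zero.mp h).symm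
  -- pick index maximizing |x i| / v i
  obtain ⟨i0, hi0⟩ := Function.ne_iff.mp hx0
  have hne : (Finset.univ : Finset (Fin n)).Nonempty := ⟨i0, Finset.mem_univ _⟩
  obtain ⟨j, -, hj⟩ := Finset.exists_max_image Finset.univ
    (fun i => ‖x i‖ / v i) hne
  simp only [Finset.mem_univ, forall_true_left] at hj
  set g : ℝ := ‖x j‖ / v j with hgdef
  have hgj : 0 < g := lt_of_lt_of_le
    (div_pos (norm_pos_iff.mpr (by simpa using hi0)) (hv i0)) (hj i0)
  have habs : ∀ i, ‖x i‖ ≤ v i * g := by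
    intro i
    have := hj i
    rwa [div_le_iff₀ (hv i), mul_comm] at this
  have hxj : ‖x j‖ = v j * g := by
    rw [hgdef, mul_comm, div_mul_cancel₀ _ (hv j).ne']
  -- the split equation
  have heq : (z - (F j j : ℂ)) * x j = ∑ i ∈ Finset.univ.erase j, M i j * x i := by
    have h1 := key j
    rw [← Finset.add_sum_erase Finset.univ (fun i => M i j * x i) (Finset.mem_univ j)] at h1
    have hMjj : M j j = (F j j : ℂ) := rfl
    rw [hMjj] at h1
    linear_combination -h1
  -- abs estimate
  set S : ℝ := ∑ i ∈ Finset.univ.erase j, v i * F i j with hSdef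
  have hineq : ‖z - (F j j : ℂ)‖ * (v j * g) ≤ S * g := by
    rw [← hxj, ← norm_mul, heq]
    calc ‖∑ i ∈ Finset.univ.erase j, M i j * x i‖
        ≤ ∑ i ∈ Finset.univ.erase j, ‖M i j * x i‖ :=
          norm_sum_le _ _
      _ ≤ ∑ i ∈ Finset.univ.erase j, (v i * F i j) * g := by
          apply Finset.sum_le_sum
          intro i hi
          have hFij : 0 ≤ F i j := hMetzler i j (Finset.ne_of_mem_erase hi)
          have hMabs : ‖M i j‖ = F i j := by
            simp [hMdef, Matrix.map_apply, Complex.norm_real, abs_of_nonneg hFij]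
          rw [norm_mul, hMabs]
          calc F i j * ‖x i‖ ≤ F i j * (v i * g) := by
                exact mul_le_mul_of_nonneg_left (habs i) hFij
            _ = (v i * F i j) * g := by ring
      _ = S * g := by rw [hSdef, Finset.sum_mul]
  have hineq2 : ‖z - (F j j : ℂ)‖ * v j ≤ S := by
    have := (mul_le_mul_iff_of_pos_right hgj).mp (by linarith [hineq] : ‖z - (F j j :ℂ)‖ * v j * g ≤ S * g)
    exact this
  have hre : (z.re - F j j) * v j ≤ S := by
    have h1 : z.re - F j j ≤ ‖z - (F j j : ℂ)‖ := by
      have := Complex.abs_re_le_norm (z - (F j j : ℂ))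
      simp only [Complex.sub_re, Complex.ofReal_re] at this
      exact le_trans (le_abs_self _) this
    nlinarith [hv j, norm_nonneg (z - (F j j : ℂ))]
  have hsum : (v ᵥ* F) j = F j j * v j + S := by
    simp only [Matrix.vecMul, dotProduct, hSdef]
    rw [← Finset.add_sum_erase Finset.univ (fun i => v i * F i j) (Finset.mem_univ j)]
    ring
  have hfin : z.re * v j < 0 := by
    have := hvF j
    rw [hsum] at this
    nlinarith
  nlinarith [hv j]
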